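/- Let p be a prime, and let P and L be sets of points and lines in F_p^2 with |P|, |L| ≤ n. Suppose that for every set of at most 5n elements of F_p there is a Freiman ring-isomorphism of order 3 onto a subset of C (e.g., when 5n < log_2 log_6 log_{18}(p) − 1), and assume the complex Szemerédi–Trotter theorem: the number of point-line incidences among at most n points and n lines in C^2 is at most c·n^{4/3}. Then the number of incidences |{(q, l) ∈ P × L : q ∈ l}| is at most c·n^{4/3}. -/

import Mathlib

/-- The ℓ1-norm of a multivariate integer polynomial. -/
noncomputable def l1Norm {n : ℕ} (f : MvPolynomial (Fin n) ℤ) : ℕ :=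
  ∑ m ∈ f.support, (f.coeff m).natAbs

/-- A finite set of triples `(a, b, c)` is a proper family of lines (`a y + b x + c = 0`)
if each has `(a, b) ≠ (0, 0)` and no two distinct triples are proportional (so distinct
triples define distinct lines). -/
def GoodLines {F : Type} [CommRing F] (L : Finset (F × F × F)) : Prop :=
  (∀ l ∈ L, (l.1, l.2.1) ≠ (0, 0)) ∧
  ∀ l₁ ∈ L, ∀ l₂ ∈ L, ∀ t : F,
    l₂.1 = t * l₁.1 → l₂.2.1 = t * l₁.2.1 → l₂.2.2 = t * l₁.2.2 → l₁ = l₂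

open scoped Classical in
/-- The number of incidences between a finite set of points `(x, y)` and a finite set of
lines `a y + b x + c = 0`. -/
noncomputable def incidences {F : Type} [CommRing F] (P : Finset (F × F))
    (L : Finset (F × F × F)) : ℕ :=
  ((P ×ˢ L).filter fun q => q.2.1 * q.1.2 + q.2.2.1 * q.1.1 + q.2.2.2 = 0).card

open MvPolynomial

lemma l1Norm_add_le {n : ℕ} (f g : MvPolynomial (Fin n) ℤ) :
    l1Norm (f + g) ≤ l1Norm f + l1Norm g := by
  classical
  unfold l1Norm
  calc ∑ m ∈ (f + g).support, ((f + g).coeff m).natAbs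
      ≤ ∑ m ∈ f.support ∪ g.support, ((f + g).coeff m).natAbs :=
        Finset.sum_le_sum_of_subset support_add
    _ ≤ ∑ m ∈ f.support ∪ g.support, ((f.coeff m).natAbs + (g.coeff m).natAbs) := by
        refine Finset.sum_le_sum fun m _ => ?_
        rw [coeff_add]; exact Int.natAbs_add_le _ _
    _ = (∑ m ∈ f.support ∪ g.support, (f.coeff m).natAbs)
        + ∑ m ∈ f.support ∪ g.support, (g.coeff m).natAbs := Finset.sum_add_distrib
    _ = _ := by
        congr 1
        · exact (Finset.sum_subset Finset.subset_union_left (fun m _ hm => by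
            simp [notMem_support_iff.mp hm])).symm
        · exact (Finset.sum_subset Finset.subset_union_right (fun m _ hm => by
            simp [notMem_support_iff.mp hm])).symm

lemma l1Norm_neg {n : ℕ} (f : MvPolynomial (Fin n) ℤ) : l1Norm (-f) = l1Norm f := by
  unfold l1Norm
  rw [support_neg]
  exact Finset.sum_congr rfl fun m _ => by rw [coeff_neg, Int.natAbs_neg]

lemma l1Norm_sub_le {n : ℕ} (f g : MvPolynomial (Fin n) ℤ) :
    l1Norm (f - g) ≤ l1Norm f + l1Norm g := by
  rw [sub_eq_add_neg]
  exact (l1Norm_add_le f (-g)).trans (by rw [l1Norm_neg])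

lemma l1Norm_monomial_le {n : ℕ} (m : Fin n →₀ ℕ) (c : ℤ) :
    l1Norm (monomial m c) ≤ c.natAbs := by
  classical
  unfold l1Norm
  rcases eq_or_ne c 0 with rfl | hc
  · simp
  · rw [support_monomial, if_neg hc, Finset.sum_singleton, coeff_monomial, if_pos rfl]

lemma X_eq_monomial {n : ℕ} (i : Fin n) :
    (X i : MvPolynomial (Fin n) ℤ) = monomial (Finsupp.single i 1) 1 := rfl

lemma l1Norm_X_mul_X {n : ℕ} (i j : Fin n) :
    l1Norm (X i * X j : MvPolynomial (Fin n) ℤ) ≤ 1 := by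
  rw [X_eq_monomial, X_eq_monomial, monomial_mul]
  exact (l1Norm_monomial_le _ _).trans (by norm_num)

lemma l1Norm_X {n : ℕ} (i : Fin n) : l1Norm (X i : MvPolynomial (Fin n) ℤ) ≤ 1 := by
  rw [X_eq_monomial]
  exact (l1Norm_monomial_le _ _).trans (by norm_num)

lemma totalDegree_X_mul_X {n : ℕ} (i j : Fin n) :
    (X i * X j : MvPolynomial (Fin n) ℤ).totalDegree ≤ 2 := by
  refine (totalDegree_mul _ _).trans ?_
  simp [totalDegree_X]

/-- Conditional Szemerédi–Trotter theorem in `F_p` with the optimal exponent `4/3`: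
if every at most `5n` elements of `F_p` admit a Freiman ring-isomorphism of order `3`
onto a subset of `ℂ`, and the Szemerédi–Trotter bound `c n^{4/3}` holds for `n` points
and `n` lines in `ℂ²`, then at most `n` points and `n` lines in `F_p²` determine at most
`c n^{4/3}` incidences. -/
theorem szemeredi_trotter_zmod {p : ℕ} (hp : p.Prime) (n : ℕ) (c : ℝ)
    (P : Finset (ZMod p × ZMod p)) (L : Finset (ZMod p × ZMod p × ZMod p))
    (hPn : P.card ≤ n) (hLn : L.card ≤ n) (hL : GoodLines L)
    (hrect : ∀ N : ℕ, N ≤ 5 * n → ∀ a : Fin N → ZMod p, Function.Injective a →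
      ∃ b : Fin N → ℂ, Function.Injective b ∧
        ∀ f : MvPolynomial (Fin N) ℤ, f.totalDegree ≤ 3 → l1Norm f ≤ 3 →
          (MvPolynomial.aeval a f = 0 ↔ MvPolynomial.aeval b f = 0))
    (hST : ∀ (P' : Finset (ℂ × ℂ)) (L' : Finset (ℂ × ℂ × ℂ)), GoodLines L' →
      P'.card ≤ n → L'.card ≤ n → (incidences P' L' : ℝ) ≤ c * (n : ℝ) ^ ((4 : ℝ) / 3)) :
    (incidences P L : ℝ) ≤ c * (n : ℝ) ^ ((4 : ℝ) / 3) := by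
  classical
  haveI : Fact p.Prime := ⟨hp⟩
  set S : Finset (ZMod p) :=
    (P.image Prod.fst ∪ P.image Prod.snd) ∪
      (L.image (fun l => l.1) ∪ L.image (fun l => l.2.1) ∪ L.image (fun l => l.2.2))
    with hSdef
  have hS1 : ∀ q ∈ P, q.1 ∈ S := fun q hq =>
    Finset.mem_union_left _ (Finset.mem_union_left _ (Finset.mem_image_of_mem _ hq))
  have hS2 : ∀ q ∈ P, q.2 ∈ S := fun q hq =>
    Finset.mem_union_left _ (Finset.mem_union_right _ (Finset.mem_image_of_mem _ hq))
  have hS3 : ∀ l ∈ L, l.1 ∈ S := fun l hl =>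
    Finset.mem_union_right _ (Finset.mem_union_left _
      (Finset.mem_union_left _ (Finset.mem_image_of_mem _ hl)))
  have hS4 : ∀ l ∈ L, l.2.1 ∈ S := fun l hl =>
    Finset.mem_union_right _ (Finset.mem_union_left _
      (Finset.mem_union_right _ (Finset.mem_image_of_mem _ hl)))
  have hS5 : ∀ l ∈ L, l.2.2 ∈ S := fun l hl =>
    Finset.mem_union_right _ (Finset.mem_union_right _ (Finset.mem_image_of_mem _ hl))
  have hScard : S.card ≤ 5 * n := by
    calc S.card ≤ (P.image Prod.fst ∪ P.image Prod.snd).card +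
          (L.image (fun l => l.1) ∪ L.image (fun l => l.2.1) ∪ L.image (fun l => l.2.2)).card :=
            Finset.card_union_le _ _
      _ ≤ ((P.image Prod.fst).card + (P.image Prod.snd).card) +
          (((L.image (fun l => l.1)).card + (L.image (fun l => l.2.1)).card) +
            (L.image (fun l => l.2.2)).card) :=
          add_le_add (Finset.card_union_le _ _)
            ((Finset.card_union_le _ _).trans
              (add_le_add_left (Finset.card_union_le _ _) _))
      _ ≤ (n + n) + ((n + n) + n) := by
          gcongr <;> exact Finset.card_image_le.trans (by assumption)
      _ = 5 * n := by ring
  set e : {x // x ∈ S} ≃ Fin S.card := S.equivFin with he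
  set a : Fin S.card → ZMod p := fun i => ((e.symm i : {x // x ∈ S}) : ZMod p) with ha_def
  have ha : Function.Injective a := fun i j h =>
    e.symm.injective (Subtype.val_injective h)
  obtain ⟨b, hbinj, hb⟩ := hrect S.card hScard a ha
  set Φ : ZMod p → ℂ := fun x => if hx : x ∈ S then b (e ⟨x, hx⟩) else 0 with hΦdef
  have hΦ : ∀ x (hx : x ∈ S), Φ x = b (e ⟨x, hx⟩) := fun x hx => dif_pos hx
  have ha' : ∀ x (hx : x ∈ S), a (e ⟨x, hx⟩) = x := fun x hx => by
    show ((e.symm (e ⟨x, hx⟩) : {x // x ∈ S}) : ZMod p) = x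
    rw [Equiv.symm_apply_apply]
  have hΦinj : ∀ x (_ : x ∈ S) y (_ : y ∈ S), Φ x = Φ y → x = y := by
    intro x hx y hy h
    rw [hΦ x hx, hΦ y hy] at h
    exact congrArg Subtype.val (e.injective (hbinj h))
  -- transfer of vanishing
  have T1 : ∀ x (hx : x ∈ S), x = 0 ↔ Φ x = 0 := by
    intro x hx
    have h := hb (X (e ⟨x, hx⟩))
      ((totalDegree_X _).le.trans (by norm_num))
      ((l1Norm_X _).trans (by norm_num))
    simp only [aeval_X] at h
    rw [ha' x hx] at h
    rw [hΦ x hx]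
    exact h
  -- transfer of equality of products
  have T2 : ∀ x (hx : x ∈ S) y (hy : y ∈ S) z (hz : z ∈ S) w (hw : w ∈ S),
      x * y = z * w ↔ Φ x * Φ y = Φ z * Φ w := by
    intro x hx y hy z hz w hw
    have h := hb (X (e ⟨x, hx⟩) * X (e ⟨y, hy⟩) - X (e ⟨z, hz⟩) * X (e ⟨w, hw⟩))
      ((totalDegree_sub _ _).trans (max_le
        ((totalDegree_X_mul_X _ _).trans (by norm_num))
        ((totalDegree_X_mul_X _ _).trans (by norm_num))))
      ((l1Norm_sub_le _ _).trans
        ((add_le_add (l1Norm_X_mul_X _ _) (l1Norm_X_mul_X _ _)).trans (by norm_num)))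
    simp only [map_sub, map_mul, aeval_X, sub_eq_zero] at h
    rw [ha' x hx, ha' y hy, ha' z hz, ha' w hw] at h
    rw [hΦ x hx, hΦ y hy, hΦ z hz, hΦ w hw]
    exact h
  -- transfer of the incidence relation
  have T3 : ∀ u (hu : u ∈ S) v (hv : v ∈ S) w (hw : w ∈ S) x (hx : x ∈ S) y (hy : y ∈ S),
      u * v + w * x + y = 0 ↔ Φ u * Φ v + Φ w * Φ x + Φ y = 0 := by
    intro u hu v hv w hw x hx y hy
    have h := hb (X (e ⟨u, hu⟩) * X (e ⟨v, hv⟩) + X (e ⟨w, hw⟩) * X (e ⟨x, hx⟩) + X (e ⟨y, hy⟩))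
      ((totalDegree_add _ _).trans (max_le
        ((totalDegree_add _ _).trans (max_le
          ((totalDegree_X_mul_X _ _).trans (by norm_num))
          ((totalDegree_X_mul_X _ _).trans (by norm_num))))
        ((totalDegree_X _).le.trans (by norm_num))))
      ((l1Norm_add_le _ _).trans ((add_le_add
        ((l1Norm_add_le _ _).trans
          (add_le_add (l1Norm_X_mul_X _ _) (l1Norm_X_mul_X _ _)))
        (l1Norm_X _)).trans (by norm_num)))
    simp only [map_add, map_mul, aeval_X] at h
    rw [ha' u hu, ha' v hv, ha' w hw, ha' x hx, ha' y hy] at h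
    rw [hΦ u hu, hΦ v hv, hΦ w hw, hΦ x hx, hΦ y hy]
    exact h
  -- images
  set Fp : ZMod p × ZMod p → ℂ × ℂ := fun q => (Φ q.1, Φ q.2) with hFp
  set Fl : ZMod p × ZMod p × ZMod p → ℂ × ℂ × ℂ :=
    fun l => (Φ l.1, Φ l.2.1, Φ l.2.2) with hFl
  set P' : Finset (ℂ × ℂ) := P.image Fp with hP'
  set L' : Finset (ℂ × ℂ × ℂ) := L.image Fl with hL'
  have hFpinj : ∀ q ∈ P, ∀ q' ∈ P, Fp q = Fp q' → q = q' := by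
    intro q hq q' hq' h
    exact Prod.ext
      (hΦinj _ (hS1 q hq) _ (hS1 q' hq') (congrArg Prod.fst h))
      (hΦinj _ (hS2 q hq) _ (hS2 q' hq') (congrArg Prod.snd h))
  have hFlinj : ∀ l ∈ L, ∀ l' ∈ L, Fl l = Fl l' → l = l' := by
    intro l hl l' hl' h
    have h1 := congrArg Prod.fst h
    have h2 := congrArg (fun x => x.2.1) h
    have h3 := congrArg (fun x => x.2.2) h
    exact Prod.ext (hΦinj _ (hS3 l hl) _ (hS3 l' hl') h1)
      (Prod.ext (hΦinj _ (hS4 l hl) _ (hS4 l' hl') h2)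
        (hΦinj _ (hS5 l hl) _ (hS5 l' hl') h3))
  have hP'card : P'.card ≤ n := (Finset.card_image_le).trans hPn
  have hL'card : L'.card ≤ n := (Finset.card_image_le).trans hLn
  -- L' is a good family of lines
  have hGL' : GoodLines L' := by
    constructor
    · rintro l' hl'
      obtain ⟨l, hl, rfl⟩ := Finset.mem_image.mp hl'
      intro h
      have h1 : Φ l.1 = 0 := congrArg Prod.fst h
      have h2 : Φ l.2.1 = 0 := congrArg Prod.snd h
      exact hL.1 l hl (Prod.ext ((T1 _ (hS3 l hl)).mpr h1) ((T1 _ (hS4 l hl)).mpr h2))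
    · rintro l₁' hl₁' l₂' hl₂' t h1 h2 h3
      obtain ⟨l₁, hl₁, rfl⟩ := Finset.mem_image.mp hl₁'
      obtain ⟨l₂, hl₂, rfl⟩ := Finset.mem_image.mp hl₂'
      -- cross products vanish in ℂ
      have hA : Φ l₂.1 * Φ l₁.2.1 = Φ l₁.1 * Φ l₂.2.1 := by
        show (Fl l₂).1 * Φ l₁.2.1 = Φ l₁.1 * (Fl l₂).2.1
        rw [h1, h2]; show t * (Fl l₁).1 * Φ l₁.2.1 = Φ l₁.1 * (t * (Fl l₁).2.1); ring
      have hB : Φ l₂.1 * Φ l₁.2.2 = Φ l₁.1 * Φ l₂.2.2 := by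
        show (Fl l₂).1 * Φ l₁.2.2 = Φ l₁.1 * (Fl l₂).2.2
        rw [h1, h3]; show t * (Fl l₁).1 * Φ l₁.2.2 = Φ l₁.1 * (t * (Fl l₁).2.2); ring
      have hC : Φ l₂.2.1 * Φ l₁.2.2 = Φ l₁.2.1 * Φ l₂.2.2 := by
        show (Fl l₂).2.1 * Φ l₁.2.2 = Φ l₁.2.1 * (Fl l₂).2.2
        rw [h2, h3]; show t * (Fl l₁).2.1 * Φ l₁.2.2 = Φ l₁.2.1 * (t * (Fl l₁).2.2); ring
      -- cross products vanish in F_p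
      have eA : l₂.1 * l₁.2.1 = l₁.1 * l₂.2.1 :=
        (T2 _ (hS3 l₂ hl₂) _ (hS4 l₁ hl₁) _ (hS3 l₁ hl₁) _ (hS4 l₂ hl₂)).mpr hA
      have eB : l₂.1 * l₁.2.2 = l₁.1 * l₂.2.2 :=
        (T2 _ (hS3 l₂ hl₂) _ (hS5 l₁ hl₁) _ (hS3 l₁ hl₁) _ (hS5 l₂ hl₂)).mpr hB
      have eC : l₂.2.1 * l₁.2.2 = l₁.2.1 * l₂.2.2 :=
        (T2 _ (hS4 l₂ hl₂) _ (hS5 l₁ hl₁) _ (hS4 l₁ hl₁) _ (hS5 l₂ hl₂)).mpr hC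
      have key : l₁ = l₂ := by
        rcases eq_or_ne l₁.1 0 with hz | hz
        · have hb₁ : l₁.2.1 ≠ 0 := by
            intro hb0
            exact hL.1 l₁ hl₁ (Prod.ext hz hb0)
          refine hL.2 l₁ hl₁ l₂ hl₂ (l₂.2.1 * l₁.2.1⁻¹) ?_ ?_ ?_
          · rw [hz, mul_zero]
            have : l₂.1 * l₁.2.1 = 0 := by rw [eA, hz, zero_mul]
            exact (mul_eq_zero.mp this).resolve_right hb₁
          · field_simp
          · field_simp
            linear_combination -eC
        · refine hL.2 l₁ hl₁ l₂ hl₂ (l₂.1 * l₁.1⁻¹) ?_ ?_ ?_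
          · field_simp
          · field_simp
            linear_combination -eA
          · field_simp
            linear_combination -eB
      rw [key]
  -- incidences are preserved
  have hinc : incidences P L = incidences P' L' := by
    unfold incidences
    apply Finset.card_bij (fun q _ => (Fp q.1, Fl q.2))
    · rintro ⟨q, l⟩ hql
      simp only [Finset.mem_filter] at hql ⊢
      obtain ⟨hmem, hcond⟩ := hql
      rw [Finset.mem_product] at hmem
      constructor
      · exact Finset.mem_product.mpr
          ⟨Finset.mem_image_of_mem _ hmem.1, Finset.mem_image_of_mem _ hmem.2⟩
      · show (Fl l).1 * (Fp q).2 + (Fl l).2.1 * (Fp q).1 + (Fl l).2.2 = 0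
        exact (T3 _ (hS3 l hmem.2) _ (hS2 q hmem.1) _ (hS4 l hmem.2)
          _ (hS1 q hmem.1) _ (hS5 l hmem.2)).mp hcond
    · rintro ⟨q, l⟩ hql ⟨q', l'⟩ hql' h
      simp only [Finset.mem_filter, Finset.mem_product] at hql hql'
      have h1 : Fp q = Fp q' := congrArg Prod.fst h
      have h2 : Fl l = Fl l' := congrArg Prod.snd h
      exact Prod.ext (hFpinj q hql.1.1 q' hql'.1.1 h1) (hFlinj l hql.1.2 l' hql'.1.2 h2)
    · rintro ⟨q', l'⟩ hql'
      simp only [Finset.mem_filter, Finset.mem_product] at hql'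
      obtain ⟨⟨hq', hl'⟩, hcond'⟩ := hql'
      obtain ⟨q, hq, rfl⟩ := Finset.mem_image.mp hq'
      obtain ⟨l, hl, rfl⟩ := Finset.mem_image.mp hl'
      refine ⟨(q, l), ?_, rfl⟩
      simp only [Finset.mem_filter, Finset.mem_product]
      refine ⟨⟨hq, hl⟩, ?_⟩
      exact (T3 _ (hS3 l hl) _ (hS2 q hq) _ (hS4 l hl)
        _ (hS1 q hq) _ (hS5 l hl)).mpr hcond'
  rw [hinc]
  exact hST P' L' hGL' hP'card hL'card
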